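/- Let F(x,X) be the determinant of the 5×5 matrix whose i-th column is (1, xᵢ², xᵢ⁴, xᵢXᵢ, Xᵢ²). Then for all x = (x₁,…,x₅) ∈ ℂ⁵, all X = (X₁,…,X₅) ∈ ℂ⁵ and all t ∈ ℂ, one has F(x, X + t·x) = F(x, X), i.e. F(x₁,…,x₅, X₁+tx₁, …, X₅+tx₅) = F(x₁,…,x₅, X₁,…,X₅). -/
import Mathlib


/-- The determinant `F(x,X)` of the 5×5 matrix whose `i`-th column is
`(1, xᵢ², xᵢ⁴, xᵢXᵢ, Xᵢ²)`. -/
noncomputable def F (x X : Fin 5 → ℂ) : ℂ :=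
  Matrix.det (Matrix.of fun (i j : Fin 5) =>
    ![(1 : ℂ), x j ^ 2, x j ^ 4, x j * X j, X j ^ 2] i)

set_option maxRecDepth 4000 in
/-- For all `x, X ∈ ℂ⁵` and `t ∈ ℂ`, `F(x, X + t·x) = F(x, X)`. -/
theorem F_translation_invariant (x X : Fin 5 → ℂ) (t : ℂ) :
    F x (fun i => X i + t * x i) = F x X := by
  set M : Matrix (Fin 5) (Fin 5) ℂ := Matrix.of fun (i j : Fin 5) =>
    ![(1 : ℂ), x j ^ 2, x j ^ 4, x j * X j, X j ^ 2] i with hM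
  set M1 := Matrix.updateRow M 4 (M 4 + (t ^ 2) • M 1) with hM1
  set M2 := Matrix.updateRow M1 4 (M1 4 + (2 * t) • M1 3) with hM2
  set M3 := Matrix.updateRow M2 3 (M2 3 + t • M2 1) with hM3
  have h1 : M1.det = M.det := Matrix.det_updateRow_add_smul_self M (by decide) _
  have h2 : M2.det = M1.det := Matrix.det_updateRow_add_smul_self M1 (by decide) _
  have h3 : M3.det = M2.det := Matrix.det_updateRow_add_smul_self M2 (by decide) _
  have key : (Matrix.of fun (i j : Fin 5) =>
      ![(1 : ℂ), x j ^ 2, x j ^ 4, x j * (X j + t * x j), (X j + t * x j) ^ 2] i) = M3 := by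
    ext i j
    simp only [hM3, hM2, hM1, hM, Matrix.updateRow_apply, Matrix.of_apply, Pi.add_apply,
      Pi.smul_apply, smul_eq_mul]
    fin_cases i <;> simp <;> ring
  show Matrix.det (Matrix.of fun (i j : Fin 5) =>
      ![(1 : ℂ), x j ^ 2, x j ^ 4, x j * (X j + t * x j), (X j + t * x j) ^ 2] i) = M.det
  rw [key, h3, h2, h1]
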